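/- Let t ∈ ℂ with t^5 = 1 and let f_t = x_0^5 + x_1^5 + x_2^5 + x_3^5 + x_4^5 − 5t·x_0x_1x_2x_3x_4 ∈ ℂ[x_0,...,x_4]. Then the set { x ∈ ℂ^5 : x_0 = 1 and ∂f_t/∂x_i(x) = 0 for all i = 0,...,4 } has exactly 125 elements; its elements are the points (1, ξ^{a_1}, ξ^{a_2}, ξ^{a_3}, ξ^{a_4}) where ξ is a fixed primitive fifth root of unity and the residues a_1,...,a_4 modulo 5 satisfy an appropriate linear congruence, so that X_t has exactly 125 singular points, all with nonzero coordinates. -/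

import Mathlib

open MvPolynomial

theorem dwork_key (t : ℂ) (x : Fin 5 → ℂ) :
    (∀ i : Fin 5, eval x (pderiv i ((∑ j : Fin 5, X j ^ 5) - C (5 * t) * ∏ j : Fin 5, X j : MvPolynomial (Fin 5) ℂ)) = 0)
    ↔ (x 0 ^ 4 = t * (x 1 * x 2 * x 3 * x 4) ∧
       x 1 ^ 4 = t * (x 0 * x 2 * x 3 * x 4) ∧
       x 2 ^ 4 = t * (x 0 * x 1 * x 3 * x 4) ∧
       x 3 ^ 4 = t * (x 0 * x 1 * x 2 * x 4) ∧
       x 4 ^ 4 = t * (x 0 * x 1 * x 2 * x 3)) := by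
  constructor
  · intro h
    have h0 := h 0; have h1 := h 1; have h2 := h 2; have h3 := h 3; have h4 := h 4
    simp only [Fin.prod_univ_five, Fin.sum_univ_five, map_sub, map_sum, pderiv_pow, pderiv_X,
      pderiv_mul] at h0 h1 h2 h3 h4
    simp [Pi.single_apply] at h0 h1 h2 h3 h4
    exact ⟨by linear_combination (1/5 : ℂ) * h0, by linear_combination (1/5 : ℂ) * h1,
      by linear_combination (1/5 : ℂ) * h2, by linear_combination (1/5 : ℂ) * h3,
      by linear_combination (1/5 : ℂ) * h4⟩
  · rintro ⟨h0, h1, h2, h3, h4⟩ i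
    fin_cases i <;>
      simp [Fin.prod_univ_five, Fin.sum_univ_five, pderiv_pow, pderiv_X, Pi.single_apply] <;>
      [linear_combination 5*h0; linear_combination 5*h1; linear_combination 5*h2;
       linear_combination 5*h3; linear_combination 5*h4]

theorem dwork_char (t : ℂ) (ht : t ^ 5 = 1) (x : Fin 5 → ℂ) :
    (x 0 = 1 ∧
       x 0 ^ 4 = t * (x 1 * x 2 * x 3 * x 4) ∧
       x 1 ^ 4 = t * (x 0 * x 2 * x 3 * x 4) ∧
       x 2 ^ 4 = t * (x 0 * x 1 * x 3 * x 4) ∧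
       x 3 ^ 4 = t * (x 0 * x 1 * x 2 * x 4) ∧
       x 4 ^ 4 = t * (x 0 * x 1 * x 2 * x 3))
    ↔ (x 0 = 1 ∧ x 1 ^ 5 = 1 ∧ x 2 ^ 5 = 1 ∧ x 3 ^ 5 = 1 ∧
       x 4 = (t * x 1 * x 2 * x 3)⁻¹) := by
  have ht0 : t ≠ 0 := fun h => by simp [h] at ht
  constructor
  · rintro ⟨hx0, h0, h1, h2, h3, h4⟩
    rw [hx0] at h0 h1 h2 h3 h4
    rw [one_pow] at h0
    have ha : x 1 ^ 5 = 1 := by linear_combination x 1 * h1 - h0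
    have hb : x 2 ^ 5 = 1 := by linear_combination x 2 * h2 - h0
    have hc : x 3 ^ 5 = 1 := by linear_combination x 3 * h3 - h0
    refine ⟨hx0, ha, hb, hc, eq_inv_of_mul_eq_one_left ?_⟩
    linear_combination (-1 : ℂ) * h0
  · rintro ⟨hx0, ha, hb, hc, hd⟩
    have ha0 : x 1 ≠ 0 := fun h => by simp [h] at ha
    have hb0 : x 2 ≠ 0 := fun h => by simp [h] at hb
    have hc0 : x 3 ≠ 0 := fun h => by simp [h] at hc
    have htabc : t * x 1 * x 2 * x 3 ≠ 0 := by
      exact mul_ne_zero (mul_ne_zero (mul_ne_zero ht0 ha0) hb0) hc0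
    have hmul : t * (x 1 * x 2 * x 3 * x 4) = 1 := by
      rw [hd]; field_simp
    have hd5 : x 4 ^ 5 = 1 := by
      rw [hd, inv_pow, inv_eq_one]
      linear_combination (x 1 ^ 5 * x 2 ^ 5 * x 3 ^ 5) * ht + (x 2 ^ 5 * x 3 ^ 5) * ha +
        (x 3 ^ 5) * hb + hc
    have hd0 : x 4 ≠ 0 := fun h => by simp [h] at hd5
    refine ⟨hx0, ?_, ?_, ?_, ?_, ?_⟩
    · rw [hx0, one_pow]; exact hmul.symm
    · rw [hx0]; apply mul_left_cancel₀ ha0; linear_combination ha - hmul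
    · rw [hx0]; apply mul_left_cancel₀ hb0; linear_combination hb - hmul
    · rw [hx0]; apply mul_left_cancel₀ hc0; linear_combination hc - hmul
    · rw [hx0]; apply mul_left_cancel₀ hd0; linear_combination hd5 - hmul

/-- For `t⁵ = 1` and `f_t = x₀⁵ + … + x₄⁵ − 5t·x₀x₁x₂x₃x₄`, the set of
points `x ∈ ℂ⁵` with `x₀ = 1` at which all partial derivatives of `f_t` vanish has exactly
125 elements, and every such point has all coordinates powers of a fixed primitive fifth
root of unity `ξ`; so `X_t ⊂ ℙ⁴` has exactly 125 singular points, all with nonzero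
coordinates. -/
theorem dwork_quintic_125_singular_points (t : ℂ) (ht : t ^ 5 = 1)
    (ξ : ℂ) (hξ : IsPrimitiveRoot ξ 5)
    (f : MvPolynomial (Fin 5) ℂ)
    (hf : f = (∑ i : Fin 5, X i ^ 5) - C (5 * t) * ∏ i : Fin 5, X i) :
    {x : Fin 5 → ℂ | x 0 = 1 ∧ ∀ i : Fin 5, eval x (pderiv i f) = 0}.ncard = 125 ∧
    ∀ x ∈ {x : Fin 5 → ℂ | x 0 = 1 ∧ ∀ i : Fin 5, eval x (pderiv i f) = 0},
      ∀ i : Fin 5, ∃ a : ℕ, x i = ξ ^ a := by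
  classical
  subst hf
  have hchar : ∀ x : Fin 5 → ℂ,
      (x 0 = 1 ∧ ∀ i : Fin 5, eval x (pderiv i ((∑ j : Fin 5, X j ^ 5) - C (5 * t) * ∏ j : Fin 5, X j : MvPolynomial (Fin 5) ℂ)) = 0)
      ↔ (x 0 = 1 ∧ x 1 ^ 5 = 1 ∧ x 2 ^ 5 = 1 ∧ x 3 ^ 5 = 1 ∧
         x 4 = (t * x 1 * x 2 * x 3)⁻¹) := by
    intro x
    rw [and_congr_right_iff]
    intro hx0
    rw [dwork_key]
    have := dwork_char t ht x
    simp only [hx0, true_and] at this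
    simp only [hx0]
    exact this
  have h5 : (0:ℕ) < 5 := by norm_num
  set R := Polynomial.nthRootsFinset 5 (1 : ℂ) with hR
  set φ : (ℂ × ℂ) × ℂ → (Fin 5 → ℂ) :=
    fun p => ![1, p.1.1, p.1.2, p.2, (t * p.1.1 * p.1.2 * p.2)⁻¹] with hφ
  have hinj : Function.Injective φ := by
    intro p q h
    have h1 := congrFun h 1
    have h2 := congrFun h 2
    have h3 := congrFun h 3
    simp [hφ] at h1 h2 h3
    exact Prod.ext (Prod.ext h1 h2) h3
  set F : Finset (Fin 5 → ℂ) := ((R ×ˢ R) ×ˢ R).image φ with hF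
  have hSF : {x : Fin 5 → ℂ | x 0 = 1 ∧ ∀ i : Fin 5, eval x (pderiv i ((∑ j : Fin 5, X j ^ 5) - C (5 * t) * ∏ j : Fin 5, X j : MvPolynomial (Fin 5) ℂ)) = 0} = ↑F := by
    ext x
    rw [Set.mem_setOf_eq, hchar x]
    simp only [hF, Finset.coe_image, Set.mem_image, Finset.mem_coe, Finset.mem_product,
      hR, Polynomial.mem_nthRootsFinset h5]
    constructor
    · rintro ⟨hx0, ha, hb, hc, hd⟩
      refine ⟨((x 1, x 2), x 3), ⟨⟨ha, hb⟩, hc⟩, ?_⟩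
      funext j
      fin_cases j <;> simp [hφ, hx0, hd]
    · rintro ⟨⟨⟨a, b⟩, c⟩, ⟨⟨ha, hb⟩, hc⟩, rfl⟩
      refine ⟨rfl, ?_, ?_, ?_, ?_⟩ <;> simp [hφ, ha, hb, hc]
  constructor
  · rw [hSF, Set.ncard_coe_finset, hF, Finset.card_image_of_injective _ hinj,
      Finset.card_product, Finset.card_product, hξ.card_nthRootsFinset]
  · intro x hx i
    rw [Set.mem_setOf_eq, hchar x] at hx
    obtain ⟨hx0, ha, hb, hc, hd⟩ := hx
    have ht0 : t ≠ 0 := fun h => by simp [h] at ht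
    have hd5 : x 4 ^ 5 = 1 := by
      rw [hd, inv_pow, inv_eq_one]
      linear_combination (x 1 ^ 5 * x 2 ^ 5 * x 3 ^ 5) * ht + (x 2 ^ 5 * x 3 ^ 5) * ha +
        (x 3 ^ 5) * hb + hc
    have hpow : x i ^ 5 = 1 := by
      fin_cases i
      · show x 0 ^ 5 = 1; rw [hx0]; norm_num
      · exact ha
      · exact hb
      · exact hc
      · exact hd5
    obtain ⟨a, _, haa⟩ := hξ.eq_pow_of_pow_eq_one hpow
    exact ⟨a, haa.symm⟩
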